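/- For independent exponential random variables γ_g, γ_h with means m_g ≠ m_h, E[ln(1 + γ_g/γ_h)] = m_g ln(m_g/m_h)/(m_g - m_h). -/

import Mathlib

open MeasureTheory ProbabilityTheory Real Set Filter

lemma expMeasure_def (r : ℝ) : expMeasure r = volume.withDensity (exponentialPDF r) := rfl

lemma measurable_exponentialPDF' (r : ℝ) : Measurable (exponentialPDF r) :=
  (measurable_exponentialPDFReal r).ennreal_ofReal

lemma expMeasure_Iic_zero {r : ℝ} (hr : 0 < r) : expMeasure r (Iic 0) = 0 := by
  rw [expMeasure_def, withDensity_apply _ measurableSet_Iic,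
    lintegral_exponentialPDF_eq_antiDeriv hr 0]
  simp

lemma expMeasure_Ioi {r c : ℝ} (hr : 0 < r) (hc : 0 ≤ c) :
    expMeasure r (Ioi c) = ENNReal.ofReal (exp (-(r * c))) := by
  have : IsProbabilityMeasure (expMeasure r) := isProbabilityMeasure_expMeasure hr
  have hIic : expMeasure r (Iic c) = ENNReal.ofReal (1 - exp (-(r * c))) := by
    rw [expMeasure_def, withDensity_apply _ measurableSet_Iic,
      lintegral_exponentialPDF_eq_antiDeriv hr c, if_pos hc]
  have hcompl : Ioi c = (Iic c)ᶜ := by ext x; simp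
  rw [hcompl, measure_compl measurableSet_Iic (measure_ne_top _ _), measure_univ, hIic]
  have h1 : rexp (-(r * c)) ≤ 1 := exp_le_one_iff.2 (by nlinarith)
  rw [← ENNReal.ofReal_one, ← ENNReal.ofReal_sub _ (by nlinarith)]
  norm_num

lemma expMeasure_ae_pos {r : ℝ} (hr : 0 < r) : ∀ᵐ h ∂(expMeasure r), 0 < h := by
  rw [ae_iff]
  simp only [not_lt]
  exact measure_mono_null (fun x hx ↦ hx) (expMeasure_Iic_zero hr)

lemma integral_exp_neg_mul_Ioi {d : ℝ} (hd : 0 < d) :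
    ∫ x in Ioi (0:ℝ), exp (-(d * x)) = 1 / d := by
  have hderiv : ∀ x ∈ Ici (0:ℝ), HasDerivAt (fun a ↦ -exp (-(d * a)) / d) (exp (-(d * x))) x := by
    intro x _
    have := (hasDerivAt_neg_exp_mul_exp (r := d) (x := x)).div_const d
    refine this.congr_deriv ?_
    rw [mul_div_cancel_left₀ _ hd.ne']
  have htend : Tendsto (fun a ↦ -exp (-(d * a)) / d) atTop (nhds 0) := by
    have h0 : Tendsto (fun a : ℝ ↦ -(d * a)) atTop atBot := by
      simp only [neg_mul_eq_neg_mul]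
      exact Tendsto.const_mul_atTop_of_neg (by linarith) tendsto_id
    have := (Real.tendsto_exp_atBot.comp h0).neg.div_const d
    simpa using this
  have := integral_Ioi_of_hasDerivAt_of_nonneg' hderiv (fun x _ ↦ (exp_pos _).le) htend
  rw [this]; simp [hd.ne']; ring

lemma exp_tail_lintegral {a b t : ℝ} (ha : 0 < a) (hb : 0 < b) (ht : 0 < t) :
    ∫⁻ h, expMeasure a (Ioi (t * h)) ∂(expMeasure b)
      = ENNReal.ofReal (b / (b + a * t)) := by
  have hd : 0 < b + a * t := by positivity
  have step5 : ∫⁻ h, expMeasure a (Ioi (t * h)) ∂(expMeasure b)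
      = ∫⁻ h, ENNReal.ofReal (exp (-(a * (t * h)))) ∂(expMeasure b) := by
    refine lintegral_congr_ae ?_
    filter_upwards [expMeasure_ae_pos hb] with h hh
    rw [expMeasure_Ioi ha (by positivity)]
  rw [step5, expMeasure_def,
    lintegral_withDensity_eq_lintegral_mul _ (measurable_exponentialPDF' b)
      (by fun_prop)]
  have hsplit : ∫⁻ h, (exponentialPDF b * fun h ↦ ENNReal.ofReal (exp (-(a * (t * h))))) h
      = ∫⁻ h in Ioi 0, ENNReal.ofReal (b * exp (-((b + a * t) * h))) := by
    rw [← lintegral_add_compl _ (measurableSet_Ici (a := (0:ℝ)))]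
    have hzero : ∫⁻ h in (Ici (0:ℝ))ᶜ,
        (exponentialPDF b * fun h ↦ ENNReal.ofReal (exp (-(a * (t * h))))) h = 0 := by
      rw [compl_Ici]
      have h0 : ∀ᵐ h ∂(volume.restrict (Iio (0:ℝ))),
          (exponentialPDF b * fun h ↦ ENNReal.ofReal (exp (-(a * (t * h))))) h = 0 := by
        filter_upwards [ae_restrict_mem measurableSet_Iio] with h hh
        simp [exponentialPDF_of_neg hh]
      rw [lintegral_congr_ae h0, lintegral_zero]
    rw [hzero, add_zero, ← Measure.restrict_congr_set Ioi_ae_eq_Ici]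
    refine setLIntegral_congr_fun_ae measurableSet_Ioi (ae_of_all _ fun h (hh : 0 < h) ↦ ?_)
    simp only [Pi.mul_apply, exponentialPDF_of_nonneg hh.le]
    rw [← ENNReal.ofReal_mul (by positivity)]
    congr 1
    rw [mul_assoc, ← Real.exp_add]
    ring_nf
  rw [hsplit, ← ofReal_integral_eq_lintegral_ofReal]
  · rw [MeasureTheory.integral_const_mul, integral_exp_neg_mul_Ioi hd, mul_one_div]
  · refine Integrable.const_mul ?_ b
    have := exp_neg_integrableOn_Ioi 0 hd
    simpa only [neg_mul, IntegrableOn] using this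
  · exact ae_of_all _ fun h ↦ by positivity

lemma intervalIntegral_inv_one_add {z : ℝ} (hz : 0 ≤ z) :
    ∫ s in (0:ℝ)..z, (1 + s)⁻¹ = Real.log (1 + z) := by
  have hderiv : ∀ s ∈ uIcc (0:ℝ) z, HasDerivAt (fun y ↦ Real.log (1 + y)) (1 + s)⁻¹ s := by
    intro s hs
    rw [uIcc_of_le hz] at hs
    have h1 : (1:ℝ) + s ≠ 0 := by nlinarith [hs.1]
    have := ((hasDerivAt_id s).const_add 1).log h1
    simpa [one_div] using this
  have hint : IntervalIntegrable (fun s : ℝ ↦ (1 + s)⁻¹) volume 0 z := by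
    apply ContinuousOn.intervalIntegrable
    apply ContinuousOn.inv₀ (by fun_prop)
    intro x hx
    rw [uIcc_of_le hz] at hx
    nlinarith [hx.1]
  have := intervalIntegral.integral_eq_sub_of_hasDerivAt hderiv hint
  simpa using this

lemma final_integral {mg mh : ℝ} (hmg : 0 < mg) (hmh : 0 < mh) (hne : mg ≠ mh) :
    IntegrableOn (fun t ↦ mg / ((mg + mh * t) * (1 + t))) (Ioi (0:ℝ)) volume ∧
    ∫ t in Ioi (0:ℝ), mg / ((mg + mh * t) * (1 + t))
      = mg * Real.log (mg / mh) / (mg - mh) := by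
  set c : ℝ := mg / (mg - mh) with hc
  set F : ℝ → ℝ := fun t ↦ c * (Real.log (1 + t) - Real.log (mg + mh * t)) with hF
  have hsub : mg - mh ≠ 0 := sub_ne_zero.2 hne
  have hderiv : ∀ t ∈ Ici (0:ℝ), HasDerivAt F (mg / ((mg + mh * t) * (1 + t))) t := by
    intro t ht
    have ht0 : (0:ℝ) ≤ t := ht
    have h1 : (1:ℝ) + t ≠ 0 := by nlinarith
    have h2 : mg + mh * t ≠ 0 := by nlinarith
    have d1 : HasDerivAt (fun y ↦ Real.log (1 + y)) (1 / (1 + t)) t :=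
      ((hasDerivAt_id t).const_add 1).log h1
    have d2 : HasDerivAt (fun y ↦ Real.log (mg + mh * y)) (mh / (mg + mh * t)) t := by
      have := (((hasDerivAt_id t).const_mul mh).const_add mg).log h2
      simpa [mul_one] using this
    have := ((d1.sub d2).const_mul c)
    refine this.congr_deriv ?_
    rw [hc]; field_simp; ring
  have hnn : ∀ t ∈ Ioi (0:ℝ), 0 ≤ mg / ((mg + mh * t) * (1 + t)) := by
    intro t ht
    have : (0:ℝ) < t := ht
    positivity
  have htend : Tendsto F atTop (nhds (c * (- Real.log mh))) := by
    have hE : (fun t ↦ c * Real.log ((1 + t) / (mg + mh * t))) =ᶠ[atTop] F := by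
      filter_upwards [eventually_gt_atTop 0] with t ht
      rw [hF, Real.log_div (by nlinarith) (by nlinarith)]
    rw [show c * (- Real.log mh) = c * Real.log (1 / mh) by
      rw [Real.log_div one_ne_zero hmh.ne']; simp]
    apply Tendsto.congr' hE
    apply Tendsto.const_mul
    have hq : Tendsto (fun t : ℝ ↦ (1 + t) / (mg + mh * t)) atTop (nhds (1 / mh)) := by
      have hE2 : (fun t : ℝ ↦ (1 / t + 1) / (mg / t + mh)) =ᶠ[atTop] fun t ↦ (1 + t) / (mg + mh * t) := by
        filter_upwards [eventually_gt_atTop 0] with t ht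
        have ht' : t ≠ 0 := ht.ne'
        have h2 : mg + mh * t ≠ 0 := by nlinarith
        have h3 : mg / t + mh ≠ 0 := by positivity
        field_simp
      apply Tendsto.congr' hE2
      have h1 : Tendsto (fun t : ℝ ↦ 1 / t + 1) atTop (nhds 1) := by
        have := tendsto_inv_atTop_zero (𝕜 := ℝ) |>.add (tendsto_const_nhds (x := (1:ℝ)))
        simpa [one_div] using this
      have h2 : Tendsto (fun t : ℝ ↦ mg / t + mh) atTop (nhds mh) := by
        have := ((tendsto_inv_atTop_zero (𝕜 := ℝ)).const_mul mg).add (tendsto_const_nhds (x := mh))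
        simpa [div_eq_mul_inv] using this
      exact h1.div h2 hmh.ne'
    exact ((Real.continuousAt_log (by positivity)).tendsto.comp hq)
  constructor
  · exact integrableOn_Ioi_deriv_of_nonneg' hderiv hnn htend
  · rw [integral_Ioi_of_hasDerivAt_of_nonneg' hderiv hnn htend]
    rw [hF, hc]
    simp only [mul_zero, add_zero, Real.log_one]
    rw [Real.log_div hmg.ne' hmh.ne']
    field_simp
    ring

lemma tail_prob {Ω : Type*} [MeasureSpace Ω] [IsProbabilityMeasure (ℙ : Measure Ω)]
    (G H : Ω → ℝ) (a b : ℝ) (ha : 0 < a) (hb : 0 < b)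
    (hG : Measurable G) (hH : Measurable H)
    (hGd : Measure.map G ℙ = expMeasure a) (hHd : Measure.map H ℙ = expMeasure b)
    (hind : IndepFun G H ℙ) {t : ℝ} (ht : 0 < t) :
    ℙ {ω | t < G ω / H ω} = ENNReal.ofReal (b / (b + a * t)) := by
  have hpa : IsProbabilityMeasure (expMeasure a) := isProbabilityMeasure_expMeasure ha
  have hpb : IsProbabilityMeasure (expMeasure b) := isProbabilityMeasure_expMeasure hb
  have hHpos : ∀ᵐ ω ∂(ℙ : Measure Ω), 0 < H ω := by
    have h0 : ℙ (H ⁻¹' (Iic 0)) = 0 := by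
      rw [← Measure.map_apply hH measurableSet_Iic, hHd, expMeasure_Iic_zero hb]
    rw [ae_iff]
    simp only [not_lt]
    exact measure_mono_null (fun x hx ↦ hx) h0
  have hset : {ω | t < G ω / H ω} =ᵐ[ℙ] {ω | t * H ω < G ω} := by
    filter_upwards [hHpos] with ω hω
    simp only [Set.mem_setOf_eq, eq_iff_iff]
    exact lt_div_iff₀ hω
  have hS : MeasurableSet {p : ℝ × ℝ | t * p.2 < p.1} :=
    measurableSet_lt (measurable_snd.const_mul t) measurable_fst
  rw [measure_congr hset,
    show {ω | t * H ω < G ω} = (fun ω ↦ (G ω, H ω)) ⁻¹' {p : ℝ × ℝ | t * p.2 < p.1} from rfl,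
    ← Measure.map_apply (hG.prodMk hH) hS,
    (indepFun_iff_map_prod_eq_prod_map_map hG.aemeasurable hH.aemeasurable).1 hind,
    hGd, hHd, Measure.prod_apply_symm hS]
  have hpre : ∀ h : ℝ, ((fun g ↦ (g, h)) ⁻¹' {p : ℝ × ℝ | t * p.2 < p.1}) = Ioi (t * h) := by
    intro h; ext g; simp [Set.mem_Ioi]
  simp only [hpre]
  exact exp_tail_lintegral ha hb ht

theorem exp_log_one_add_ratio_mean {Ω : Type*} [MeasureSpace Ω]
    [IsProbabilityMeasure (ℙ : Measure Ω)]
    (G H : Ω → ℝ) (mg mh : ℝ) (hmg : 0 < mg) (hmh : 0 < mh) (hne : mg ≠ mh)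
    (hG : Measurable G) (hH : Measurable H)
    (hGd : Measure.map G ℙ = expMeasure (1 / mg))
    (hHd : Measure.map H ℙ = expMeasure (1 / mh))
    (hind : IndepFun G H ℙ) :
    ∫ ω, Real.log (1 + G ω / H ω) ∂ℙ = mg * Real.log (mg / mh) / (mg - mh) := by
  have ha : (0:ℝ) < 1 / mg := by positivity
  have hb : (0:ℝ) < 1 / mh := by positivity
  have hHpos : ∀ᵐ ω ∂(ℙ : Measure Ω), 0 < H ω := by
    have h0 : ℙ (H ⁻¹' (Iic 0)) = 0 := by
      rw [← Measure.map_apply hH measurableSet_Iic, hHd, expMeasure_Iic_zero hb]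
    rw [ae_iff]; simp only [not_lt]
    exact measure_mono_null (fun x hx ↦ hx) h0
  have hGnn : ∀ᵐ ω ∂(ℙ : Measure Ω), 0 ≤ G ω := by
    have h0 : ℙ (G ⁻¹' (Iic 0)) = 0 := by
      rw [← Measure.map_apply hG measurableSet_Iic, hGd, expMeasure_Iic_zero ha]
    rw [ae_iff]; simp only [not_le]
    exact measure_mono_null (fun x (hx : G x < 0) ↦ le_of_lt hx) h0
  have hf_nn : 0 ≤ᵐ[(ℙ : Measure Ω)] fun ω ↦ G ω / H ω := by
    filter_upwards [hHpos, hGnn] with ω h1 h2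
    exact div_nonneg h2 h1.le
  have hf_mble : AEMeasurable (fun ω ↦ G ω / H ω) (ℙ : Measure Ω) :=
    (hG.div hH).aemeasurable
  have hg_intble : ∀ t > (0:ℝ), IntervalIntegrable (fun s ↦ (1 + s)⁻¹) volume 0 t := by
    intro t ht
    apply ContinuousOn.intervalIntegrable
    apply ContinuousOn.inv₀ (by fun_prop)
    intro x hx
    rw [uIcc_of_le ht.le] at hx
    nlinarith [hx.1]
  have hg_nn : ∀ᵐ t ∂(volume.restrict (Ioi (0:ℝ))), 0 ≤ (1 + t)⁻¹ := by
    filter_upwards [ae_restrict_mem measurableSet_Ioi] with t ht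
    have : (0:ℝ) < t := ht
    positivity
  have hlog_nn : 0 ≤ᵐ[(ℙ : Measure Ω)] fun ω ↦ Real.log (1 + G ω / H ω) := by
    filter_upwards [hf_nn] with ω hω
    have hω' : (0:ℝ) ≤ G ω / H ω := hω
    exact Real.log_nonneg (by linarith)
  have hlog_meas : AEStronglyMeasurable (fun ω ↦ Real.log (1 + G ω / H ω)) (ℙ : Measure Ω) :=
    ((measurable_const.add (hG.div hH)).log).aestronglyMeasurable
  have hFI := final_integral hmg hmh hne
  rw [integral_eq_lintegral_of_nonneg_ae hlog_nn hlog_meas]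
  have key : ∫⁻ ω, ENNReal.ofReal (Real.log (1 + G ω / H ω)) ∂ℙ
      = ENNReal.ofReal (∫ t in Ioi (0:ℝ), mg / ((mg + mh * t) * (1 + t))) := by
    have step1 : ∫⁻ ω, ENNReal.ofReal (Real.log (1 + G ω / H ω)) ∂ℙ
        = ∫⁻ ω, ENNReal.ofReal (∫ s in (0:ℝ)..(G ω / H ω), (1 + s)⁻¹) ∂ℙ := by
      refine lintegral_congr_ae ?_
      filter_upwards [hf_nn] with ω hω
      rw [intervalIntegral_inv_one_add hω]
    rw [step1, lintegral_comp_eq_lintegral_meas_lt_mul ℙ hf_nn hf_mble hg_intble hg_nn]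
    have step2 : ∫⁻ t in Ioi (0:ℝ), ℙ {ω | t < G ω / H ω} * ENNReal.ofReal (1 + t)⁻¹
        = ∫⁻ t in Ioi (0:ℝ), ENNReal.ofReal (mg / ((mg + mh * t) * (1 + t))) := by
      refine setLIntegral_congr_fun_ae measurableSet_Ioi (ae_of_all _ fun t (ht : 0 < t) ↦ ?_)
      rw [tail_prob G H _ _ ha hb hG hH hGd hHd hind ht,
        ← ENNReal.ofReal_mul (by positivity)]
      congr 1
      have h1 : (1:ℝ) + t ≠ 0 := by positivity
      have h2 : mg + mh * t ≠ 0 := by positivity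
      have h3 : 1 / mh + 1 / mg * t ≠ 0 := by positivity
      field_simp
    rw [step2, ← ofReal_integral_eq_lintegral_ofReal hFI.1 ?_]
    filter_upwards [ae_restrict_mem measurableSet_Ioi] with t ht
    have : (0:ℝ) < t := ht
    positivity
  rw [key, ENNReal.toReal_ofReal, hFI.2]
  exact setIntegral_nonneg measurableSet_Ioi fun t ht ↦ by
    have : (0:ℝ) < t := ht; positivity
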